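/- arXiv:2004.07231 — 2 statements merged into one kernel-verified Lean document; each statement's English description precedes it below -/
import Mathlib

section
/- Let (Ω, μ) be a probability space, let S : Ω → ℝ be a random variable whose law is the uniform distribution on [0,1], let Ŝ : Ω → ℝ be any random variable, let δ > 0 and let M ≥ 1 be an integer. Then μ{ ω : ⌈M·Ŝ(ω)⌉ ≠ ⌈M·S(ω)⌉ and |Ŝ(ω) − S(ω)| ≤ δ } ≤ 2δM. -/
open MeasureTheory

/-- If two reals have different ceilings, the second one is within `|a - b|`
of some integer. -/
lemma ceil_ne_exists_int (a b : ℝ) (h : ⌈a⌉ ≠ ⌈b⌉) :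
    ∃ k : ℤ, |b - (k : ℝ)| ≤ |a - b| := by
  rcases lt_or_gt_of_ne h with h1 | h1
  · refine ⟨⌈a⌉, ?_⟩
    have h2 : ((⌈a⌉ : ℝ)) < b := by
      have : ((⌈a⌉ : ℝ)) + 1 ≤ (⌈b⌉ : ℝ) := by exact_mod_cast Int.add_one_le_iff.mpr h1
      have hb : (⌈b⌉ : ℝ) < b + 1 := Int.ceil_lt_add_one b
      linarith
    have h3 : a ≤ (⌈a⌉ : ℝ) := Int.le_ceil a
    rw [abs_of_nonneg (by linarith), abs_sub_comm]
    calc b - (⌈a⌉ : ℝ) ≤ b - a := by linarith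
      _ ≤ |b - a| := le_abs_self _
  · refine ⟨⌈b⌉, ?_⟩
    have h2 : ((⌈b⌉ : ℝ)) < a := by
      have : ((⌈b⌉ : ℝ)) + 1 ≤ (⌈a⌉ : ℝ) := by exact_mod_cast Int.add_one_le_iff.mpr h1
      have ha : (⌈a⌉ : ℝ) < a + 1 := Int.ceil_lt_add_one a
      linarith
    have h3 : b ≤ (⌈b⌉ : ℝ) := Int.le_ceil b
    rw [abs_of_nonpos (by linarith)]
    calc -(b - (⌈b⌉ : ℝ)) = (⌈b⌉ : ℝ) - b := by ring
      _ ≤ a - b := by linarith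
      _ ≤ |a - b| := le_abs_self _

/-- boundary-layer bound for a uniform target on `[0,1]`. -/
theorem quantization_boundary_bound
    {Ω : Type*} [MeasurableSpace Ω] (μ : Measure Ω) [IsProbabilityMeasure μ]
    (S Shat : Ω → ℝ) (hS : Measurable S) (hShat : Measurable Shat)
    (hlaw : μ.map S = volume.restrict (Set.Icc (0:ℝ) 1))
    (δ : ℝ) (hδ : 0 < δ) (M : ℕ) (hM : 1 ≤ M) :
    μ {ω | ⌈(M:ℝ) * Shat ω⌉ ≠ ⌈(M:ℝ) * S ω⌉ ∧ |Shat ω - S ω| ≤ δ}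
      ≤ ENNReal.ofReal (2 * δ * M) := by
  have hMpos : (0:ℝ) < M := by exact_mod_cast hM
  by_cases hcase : 1 ≤ 2 * δ * M
  · calc μ _ ≤ 1 := prob_le_one
      _ ≤ ENNReal.ofReal (2 * δ * M) := ENNReal.one_le_ofReal.mpr hcase
  push_neg at hcase
  -- key measure computation for intervals
  have key : ∀ u v : ℝ, μ {ω | S ω ∈ Set.Icc u v} ≤ ENNReal.ofReal (v - u) := by
    intro u v
    have : μ {ω | S ω ∈ Set.Icc u v} = μ.map S (Set.Icc u v) :=
      (Measure.map_apply hS measurableSet_Icc).symm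
    rw [this, hlaw, Measure.restrict_apply measurableSet_Icc]
    calc volume (Set.Icc u v ∩ Set.Icc 0 1) ≤ volume (Set.Icc u v) :=
          measure_mono Set.inter_subset_left
      _ = ENNReal.ofReal (v - u) := Real.volume_Icc
  -- S lands in [0,1] a.s.
  have hS01 : μ {ω | S ω ∉ Set.Icc (0:ℝ) 1} = 0 := by
    have : μ {ω | S ω ∉ Set.Icc (0:ℝ) 1} = μ.map S (Set.Icc (0:ℝ) 1)ᶜ :=
      (Measure.map_apply hS measurableSet_Icc.compl).symm
    rw [this, hlaw, Measure.restrict_apply measurableSet_Icc.compl,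
      Set.compl_inter_self, measure_empty]
  -- inclusion into boundary layers
  have hsub : {ω | ⌈(M:ℝ) * Shat ω⌉ ≠ ⌈(M:ℝ) * S ω⌉ ∧ |Shat ω - S ω| ≤ δ} ⊆
      {ω | S ω ∉ Set.Icc (0:ℝ) 1} ∪
      ({ω | S ω ∈ Set.Icc (0:ℝ) δ} ∪ {ω | S ω ∈ Set.Icc (1 - δ) 1} ∪
        ⋃ k ∈ Finset.Ico 1 M, {ω | S ω ∈ Set.Icc ((k:ℝ)/M - δ) ((k:ℝ)/M + δ)}) := by
    rintro ω ⟨h1, h2⟩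
    by_cases hin : S ω ∈ Set.Icc (0:ℝ) 1
    · right
      obtain ⟨hin0, hin1⟩ := hin
      obtain ⟨k, hk⟩ := ceil_ne_exists_int ((M:ℝ) * Shat ω) ((M:ℝ) * S ω) h1
      have hk' : |(M:ℝ) * S ω - k| ≤ (M:ℝ) * δ := by
        refine hk.trans ?_
        have he : (M:ℝ) * Shat ω - (M:ℝ) * S ω = (M:ℝ) * (Shat ω - S ω) := by ring
        rw [he, abs_mul, abs_of_nonneg hMpos.le]
        exact mul_le_mul_of_nonneg_left h2 hMpos.le
      have habs := abs_le.mp hk'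
      have hMd : (M:ℝ) * δ < 1 / 2 := by linarith
      have hk0 : 0 ≤ k := by
        have h5 : (-1 : ℝ) < (k : ℝ) := by nlinarith [habs.2]
        have : (-1 : ℤ) < k := by exact_mod_cast h5
        omega
      have hkM : k ≤ M := by
        have h5 : ((k : ℝ)) < (M : ℝ) + 1 := by nlinarith [habs.1]
        have : k < (M : ℤ) + 1 := by exact_mod_cast h5
        omega
      rcases eq_or_lt_of_le hk0 with h0 | h0
      · -- k = 0 : S ∈ [0, δ]
        left; left
        refine ⟨hin0, ?_⟩
        have h5 : (M:ℝ) * S ω ≤ (M:ℝ) * δ := by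
          have := habs.2; rw [← h0] at this; push_cast at this; linarith
        exact le_of_mul_le_mul_left h5 hMpos
      rcases eq_or_lt_of_le hkM with hMk | hMk
      · -- k = M : S ∈ [1-δ, 1]
        left; right
        refine ⟨?_, hin1⟩
        have h5 : (M:ℝ) * (1 - δ) ≤ (M:ℝ) * S ω := by
          have := habs.1; rw [hMk] at this; push_cast at this; nlinarith
        exact le_of_mul_le_mul_left h5 hMpos
      · -- 1 ≤ k < M
        right
        have hc : ((k.toNat : ℕ) : ℝ) = (k : ℝ) := by
          exact_mod_cast congrArg (Int.cast : ℤ → ℝ) (Int.toNat_of_nonneg hk0)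
        refine Set.mem_biUnion (show k.toNat ∈ Finset.Ico 1 M from
          Finset.mem_Ico.mpr ⟨by omega, by omega⟩) ?_
        show S ω ∈ Set.Icc ((k.toNat : ℝ)/M - δ) ((k.toNat : ℝ)/M + δ)
        rw [hc, Set.mem_Icc]
        constructor
        · have h5 : (M:ℝ) * ((k:ℝ)/M - δ) ≤ (M:ℝ) * S ω := by
            have he : (M:ℝ) * ((k:ℝ)/M - δ) = (k:ℝ) - (M:ℝ) * δ := by
              field_simp
              try ring
            rw [he]; linarith [habs.1]
          exact le_of_mul_le_mul_left h5 hMpos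
        · have h5 : (M:ℝ) * S ω ≤ (M:ℝ) * ((k:ℝ)/M + δ) := by
            have he : (M:ℝ) * ((k:ℝ)/M + δ) = (k:ℝ) + (M:ℝ) * δ := by
              field_simp
              try ring
            rw [he]; linarith [habs.2]
          exact le_of_mul_le_mul_left h5 hMpos
    · left; exact hin
  -- assemble
  have hsum : μ (⋃ k ∈ Finset.Ico 1 M,
      {ω | S ω ∈ Set.Icc ((k:ℝ)/M - δ) ((k:ℝ)/M + δ)}) ≤
      (M - 1) • ENNReal.ofReal (2 * δ) := by
    refine (measure_biUnion_finset_le _ _).trans ?_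
    calc ∑ k ∈ Finset.Ico 1 M, μ {ω | S ω ∈ Set.Icc ((k:ℝ)/M - δ) ((k:ℝ)/M + δ)}
        ≤ ∑ k ∈ Finset.Ico 1 M, ENNReal.ofReal (2 * δ) := by
          refine Finset.sum_le_sum fun k _ => (key _ _).trans_eq ?_
          congr 1; ring
      _ = (M - 1) • ENNReal.ofReal (2 * δ) := by
          rw [Finset.sum_const, Nat.card_Ico]
  calc μ {ω | ⌈(M:ℝ) * Shat ω⌉ ≠ ⌈(M:ℝ) * S ω⌉ ∧ |Shat ω - S ω| ≤ δ}
      ≤ μ ({ω | S ω ∉ Set.Icc (0:ℝ) 1}) +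
        (μ {ω | S ω ∈ Set.Icc (0:ℝ) δ} + μ {ω | S ω ∈ Set.Icc (1 - δ) 1} +
          μ (⋃ k ∈ Finset.Ico 1 M,
            {ω | S ω ∈ Set.Icc ((k:ℝ)/M - δ) ((k:ℝ)/M + δ)})) := by
        refine (measure_mono hsub).trans ?_
        refine (measure_union_le _ _).trans (add_le_add_right ?_ _)
        refine (measure_union_le _ _).trans (add_le_add_left ?_ _)
        exact measure_union_le _ _
    _ ≤ 0 + (ENNReal.ofReal (δ - 0) + ENNReal.ofReal (1 - (1 - δ)) +
          (M - 1) • ENNReal.ofReal (2 * δ)) := by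
        exact add_le_add hS01.le
          (add_le_add (add_le_add (key 0 δ) (key (1 - δ) 1)) hsum)
    _ ≤ ENNReal.ofReal (2 * δ * M) := by
        have h1 : (M - 1) • ENNReal.ofReal (2 * δ)
            = ENNReal.ofReal (((M - 1 : ℕ) : ℝ) * (2 * δ)) := by
          rw [nsmul_eq_mul, ← ENNReal.ofReal_natCast,
            ← ENNReal.ofReal_mul (by positivity)]
        rw [zero_add, h1, ← ENNReal.ofReal_add (by linarith) (by linarith),
          ← ENNReal.ofReal_add (by linarith) (by positivity)]
        refine ENNReal.ofReal_le_ofReal ?_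
        have h2 : ((M - 1 : ℕ) : ℝ) = (M : ℝ) - 1 := by
          push_cast [Nat.cast_sub hM]; ring
        rw [h2]; nlinarith
end

section
/- Let (Ω, μ) be a probability space, d ≥ 1 an integer, and S = (S₁,…,S_d) : Ω → ℝ^d a random vector whose law is the uniform distribution on [0,1]^d. Let Ŝ = (Ŝ₁,…,Ŝ_d) : Ω → ℝ^d be any random vector, let δ > 0, β > 0, ε ∈ [0,1], and set M̃ := ⌊β/δ⌋. If μ{ ∃ i ∈ [d] : |Ŝ_i − S_i| > δ } ≤ ε, then μ{ ∃ i ∈ [d] : ⌈M̃·Ŝ_i⌉ ≠ ⌈M̃·S_i⌉ } ≤ ε + 2dβ. -/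
open MeasureTheory

/-- converse reduction: from resolution to quantized decoding error. -/
theorem excess_resolution_to_quantized_error
    {Ω : Type*} [MeasurableSpace Ω] (μ : Measure Ω) [IsProbabilityMeasure μ]
    (d : ℕ) (hd : 1 ≤ d)
    (S Shat : Ω → Fin d → ℝ) (hS : Measurable S) (hShat : Measurable Shat)
    (hlaw : μ.map S = volume.restrict (Set.Icc (0 : Fin d → ℝ) 1))
    (δ β ε : ℝ) (hδ : 0 < δ) (hβ : 0 < β) (hε : ε ∈ Set.Icc (0:ℝ) 1)
    (herr : μ {ω | ∃ i, δ < |Shat ω i - S ω i|} ≤ ENNReal.ofReal ε) :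
    μ {ω | ∃ i, ⌈(⌊β/δ⌋ : ℝ) * Shat ω i⌉ ≠ ⌈(⌊β/δ⌋ : ℝ) * S ω i⌉}
      ≤ ENNReal.ofReal (ε + 2 * d * β) := by
  have hε0 : 0 ≤ ε := hε.1
  have hd1 : (1:ℝ) ≤ d := by exact_mod_cast hd
  -- trivial case: bound exceeds 1
  rcases le_or_gt 1 (ε + 2*d*β) with h1 | h1
  · calc μ _ ≤ 1 := prob_le_one
      _ = ENNReal.ofReal 1 := by simp
      _ ≤ ENNReal.ofReal (ε + 2*↑d*β) := ENNReal.ofReal_le_ofReal h1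
  have hβ1 : β < 1 := by nlinarith
  set Mz : ℤ := ⌊β/δ⌋ with hMzdef
  have hMz0 : 0 ≤ Mz := Int.floor_nonneg.2 (by positivity)
  rcases eq_or_lt_of_le hMz0 with hM0 | hM1
  · -- Mz = 0 : the event is empty
    have hempty : {ω | ∃ i, ⌈(Mz:ℝ) * Shat ω i⌉ ≠ ⌈(Mz:ℝ) * S ω i⌉} = ∅ := by
      ext ω; simp [← hM0]
    rw [hempty, measure_empty]
    exact zero_le
  -- main case : Mz ≥ 1
  set M : ℝ := (Mz : ℝ) with hMdef
  have hMpos : 0 < M := by rw [hMdef]; exact_mod_cast hM1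
  have hM1' : (1:ℝ) ≤ M := by rw [hMdef]; exact_mod_cast hM1
  have hMδ : M * δ ≤ β := by
    have h : M ≤ β/δ := Int.floor_le (β/δ)
    calc M * δ ≤ (β/δ) * δ := by nlinarith
      _ = β := by field_simp
  -- the bad set of values for each coordinate
  set B : Set ℝ := ⋃ k ∈ Finset.Icc (0:ℤ) Mz,
      Set.Icc (((k:ℝ) - β)/M) (((k:ℝ) + β)/M) with hBdef
  have hBmeas : MeasurableSet B :=
    Finset.measurableSet_biUnion _ (fun k _ => measurableSet_Icc)
  -- marginal law computation
  have hev : ∀ (i : Fin d) (A : Set ℝ), MeasurableSet A →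
      μ {ω | S ω i ∈ A} = volume (A ∩ Set.Icc (0:ℝ) 1) := by
    intro i A hA
    have hA' : MeasurableSet {f : Fin d → ℝ | f i ∈ A} := (measurable_pi_apply i) hA
    have h1 : {ω | S ω i ∈ A} = S ⁻¹' {f | f i ∈ A} := rfl
    rw [h1, ← Measure.map_apply hS hA', hlaw, Measure.restrict_apply hA',
      ← Set.pi_univ_Icc]
    have h2 : {f : Fin d → ℝ | f i ∈ A} ∩
        Set.univ.pi (fun j => Set.Icc ((0:Fin d → ℝ) j) ((1:Fin d → ℝ) j)) =
        Set.univ.pi (Function.update (fun _ : Fin d => Set.Icc (0:ℝ) 1) i (A ∩ Set.Icc 0 1)) := by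
      ext f
      simp only [Set.mem_inter_iff, Set.mem_setOf_eq, Set.mem_pi, Set.mem_univ,
        forall_true_left, Pi.zero_apply, Pi.one_apply]
      constructor
      · rintro ⟨hfA, hfI⟩ j
        rcases eq_or_ne j i with rfl | hj
        · simp only [Function.update_self]
          exact ⟨hfA, hfI j⟩
        · simpa [Function.update_of_ne hj] using hfI j
      · intro h
        constructor
        · have := h i
          simp only [Function.update_self] at this
          exact this.1
        · intro j
          rcases eq_or_ne j i with rfl | hj
          · have := h j
            simp only [Function.update_self] at this
            exact this.2
          · have := h j
            simpa [Function.update_of_ne hj] using this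
    rw [h2, volume_pi_pi,
      Fintype.prod_eq_single i (fun j hj => by
        simp [Function.update_of_ne hj, Real.volume_Icc])]
    simp
  -- almost surely S ∈ [0,1]^d
  have hG : μ (S ⁻¹' Set.Icc (0:Fin d → ℝ) 1)ᶜ = 0 := by
    rw [← Set.preimage_compl, ← Measure.map_apply hS measurableSet_Icc.compl, hlaw,
      Measure.restrict_apply measurableSet_Icc.compl]
    simp
  -- inclusion of the quantized-error event
  have hsub : {ω | ∃ i, ⌈M * Shat ω i⌉ ≠ ⌈M * S ω i⌉} ⊆
      ({ω | ∃ i, δ < |Shat ω i - S ω i|} ∪ (S ⁻¹' Set.Icc (0:Fin d → ℝ) 1)ᶜ) ∪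
        ⋃ i, {ω | S ω i ∈ B} := by
    intro ω hω
    by_cases hE : ∃ i, δ < |Shat ω i - S ω i|
    · exact Or.inl (Or.inl hE)
    by_cases hGm : S ω ∈ Set.Icc (0:Fin d → ℝ) 1
    swap
    · exact Or.inl (Or.inr hGm)
    right
    obtain ⟨i, hne⟩ := hω
    refine Set.mem_iUnion.2 ⟨i, ?_⟩
    push_neg at hE
    have hdiff : |Shat ω i - S ω i| ≤ δ := hE i
    set x := S ω i with hxdef
    set y := Shat ω i with hydef
    have hx0 : 0 ≤ x := hGm.1 i
    have hx1 : x ≤ 1 := hGm.2 i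
    have hMxy : |M * y - M * x| ≤ β := by
      have heq : |M * y - M * x| = M * |y - x| := by
        rw [← mul_sub, abs_mul, abs_of_nonneg hMpos.le]
      rw [heq]
      calc M * |y - x| ≤ M * δ := mul_le_mul_of_nonneg_left hdiff hMpos.le
        _ ≤ β := hMδ
    have habs' := abs_le.1 hMxy
    obtain ⟨k, hk⟩ : ∃ k : ℤ, |M * x - k| ≤ β := by
      rcases lt_trichotomy ⌈M*y⌉ ⌈M*x⌉ with hlt | heq | hgt
      · refine ⟨⌈M*y⌉, ?_⟩
        have h1 : M*y ≤ ⌈M*y⌉ := Int.le_ceil _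
        have h2 : ((⌈M*y⌉:ℤ):ℝ) < M*x := Int.lt_ceil.1 hlt
        rw [abs_le]
        constructor <;> linarith [habs'.1, habs'.2]
      · exact absurd heq hne
      · refine ⟨⌈M*x⌉, ?_⟩
        have h1 : M*x ≤ ⌈M*x⌉ := Int.le_ceil _
        have h2 : ((⌈M*x⌉:ℤ):ℝ) < M*y := Int.lt_ceil.1 hgt
        rw [abs_le]
        constructor <;> linarith [habs'.1, habs'.2]
    have habs := abs_le.1 hk
    have hMx0 : 0 ≤ M * x := mul_nonneg hMpos.le hx0
    have hMx1 : M * x ≤ M := by nlinarith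
    have hk0 : 0 ≤ k := by
      by_contra hcon
      push_neg at hcon
      have hkle : k ≤ -1 := by omega
      have : (k:ℝ) ≤ -1 := by exact_mod_cast hkle
      linarith [habs.1, habs.2]
    have hkM : k ≤ Mz := by
      by_contra hcon
      push_neg at hcon
      have hkge : Mz + 1 ≤ k := by omega
      have hc2 : (Mz:ℝ) + 1 ≤ (k:ℝ) := by exact_mod_cast hkge
      have hMk : M + 1 ≤ (k:ℝ) := by rw [hMdef]; linarith
      linarith [habs.1, habs.2]
    refine Set.mem_biUnion (Finset.mem_Icc.2 ⟨hk0, hkM⟩) ?_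
    refine Set.mem_Icc.2 ⟨?_, ?_⟩
    · rw [div_le_iff₀ hMpos]
      linarith [habs.1, habs.2]
    · rw [le_div_iff₀ hMpos]
      linarith [habs.1, habs.2]
  -- volume of the bad set is at most 2β
  have hB : volume (B ∩ Set.Icc (0:ℝ) 1) ≤ ENNReal.ofReal (2*β) := by
    have hsub2 : B ∩ Set.Icc 0 1 = ⋃ k ∈ Finset.Icc (0:ℤ) Mz,
        (Set.Icc (((k:ℝ) - β)/M) (((k:ℝ) + β)/M) ∩ Set.Icc 0 1) := by
      rw [hBdef, Set.iUnion₂_inter]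
    set c : ℤ → ℝ := fun k => if k = 0 ∨ k = Mz then β/M else 2*β/M with hcdef
    have hc0 : ∀ k, 0 ≤ c k := by
      intro k
      rw [hcdef]
      dsimp only
      split <;> positivity
    have hterm : ∀ k ∈ Finset.Icc (0:ℤ) Mz,
        volume (Set.Icc (((k:ℝ) - β)/M) (((k:ℝ) + β)/M) ∩ Set.Icc 0 1)
          ≤ ENNReal.ofReal (c k) := by
      intro k hkmem
      obtain ⟨hk0, hkM⟩ := Finset.mem_Icc.1 hkmem
      by_cases hA0 : k = 0
      · subst hA0
        have hss : Set.Icc ((((0:ℤ):ℝ) - β)/M) ((((0:ℤ):ℝ) + β)/M) ∩ Set.Icc 0 1 ⊆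
            Set.Icc (0:ℝ) (β/M) := by
          intro t ht
          refine ⟨ht.2.1, ?_⟩
          have h := ht.1.2
          have he : (((0:ℤ):ℝ) + β)/M = β/M := by norm_num
          rw [he] at h
          exact h
        calc volume _ ≤ volume (Set.Icc (0:ℝ) (β/M)) := measure_mono hss
          _ = ENNReal.ofReal (β/M) := by rw [Real.volume_Icc]; norm_num
          _ ≤ ENNReal.ofReal (c 0) := by simp [hcdef]
      by_cases hAM : k = Mz
      · subst hAM
        have hss : Set.Icc (((Mz:ℝ) - β)/M) (((Mz:ℝ) + β)/M) ∩ Set.Icc 0 1 ⊆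
            Set.Icc ((M - β)/M) 1 := by
          intro t ht
          exact ⟨ht.1.1, ht.2.2⟩
        have hval : 1 - (M - β)/M = β/M := by field_simp; ring
        calc volume _ ≤ volume (Set.Icc ((M - β)/M) 1) := measure_mono hss
          _ = ENNReal.ofReal (β/M) := by rw [Real.volume_Icc, hval]
          _ ≤ ENNReal.ofReal (c Mz) := by simp [hcdef]
      · have hval : ((k:ℝ) + β)/M - ((k:ℝ) - β)/M = 2*β/M := by ring
        calc volume _ ≤ volume (Set.Icc (((k:ℝ) - β)/M) (((k:ℝ) + β)/M)) :=
              measure_mono Set.inter_subset_left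
          _ = ENNReal.ofReal (2*β/M) := by rw [Real.volume_Icc, hval]
          _ ≤ ENNReal.ofReal (c k) := by simp [hcdef, hA0, hAM]
    have hsum : ∑ k ∈ Finset.Icc (0:ℤ) Mz, c k ≤ 2*β := by
      have hsplit : Finset.Icc (0:ℤ) Mz = insert 0 (insert Mz (Finset.Icc 1 (Mz-1))) := by
        ext k
        simp only [Finset.mem_Icc, Finset.mem_insert]
        omega
      have hm1 : (Mz:ℤ) ∉ Finset.Icc (1:ℤ) (Mz-1) := by
        simp only [Finset.mem_Icc]; omega
      have hm0 : (0:ℤ) ∉ insert Mz (Finset.Icc (1:ℤ) (Mz-1)) := by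
        simp only [Finset.mem_insert, Finset.mem_Icc]; omega
      rw [hsplit, Finset.sum_insert hm0, Finset.sum_insert hm1]
      have hc00 : c 0 = β/M := by simp [hcdef]
      have hcMz : c Mz = β/M := by simp [hcdef]
      have hmid : ∑ k ∈ Finset.Icc (1:ℤ) (Mz-1), c k = (M-1) * (2*β/M) := by
        have hconst : ∀ k ∈ Finset.Icc (1:ℤ) (Mz-1), c k = 2*β/M := by
          intro k hk
          obtain ⟨h1, h2⟩ := Finset.mem_Icc.1 hk
          have hk0 : k ≠ 0 := by omega
          have hkM : k ≠ Mz := by omega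
          simp [hcdef, hk0, hkM]
        rw [Finset.sum_congr rfl hconst, Finset.sum_const, Int.card_Icc]
        have hcard : ((Mz - 1 + 1 - 1).toNat : ℝ) = M - 1 := by
          have h : Mz - 1 + 1 - 1 = Mz - 1 := by ring
          have h3 : ((Mz - 1).toNat : ℤ) = Mz - 1 := Int.toNat_of_nonneg (by omega)
          rw [h, hMdef]
          exact_mod_cast h3
        rw [nsmul_eq_mul, hcard]
      rw [hc00, hcMz, hmid]
      have : β/M + (β/M + (M-1) * (2*β/M)) = 2*β := by
        field_simp
        ring
      linarith [this]
    calc volume (B ∩ Set.Icc (0:ℝ) 1)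
        = volume (⋃ k ∈ Finset.Icc (0:ℤ) Mz,
            (Set.Icc (((k:ℝ) - β)/M) (((k:ℝ) + β)/M) ∩ Set.Icc 0 1)) := by rw [hsub2]
      _ ≤ ∑ k ∈ Finset.Icc (0:ℤ) Mz,
            volume (Set.Icc (((k:ℝ) - β)/M) (((k:ℝ) + β)/M) ∩ Set.Icc 0 1) :=
          measure_biUnion_finset_le _ _
      _ ≤ ∑ k ∈ Finset.Icc (0:ℤ) Mz, ENNReal.ofReal (c k) := Finset.sum_le_sum hterm
      _ = ENNReal.ofReal (∑ k ∈ Finset.Icc (0:ℤ) Mz, c k) :=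
          (ENNReal.ofReal_sum_of_nonneg (fun k _ => hc0 k)).symm
      _ ≤ ENNReal.ofReal (2*β) := ENNReal.ofReal_le_ofReal hsum
  -- final assembly
  calc μ {ω | ∃ i, ⌈M * Shat ω i⌉ ≠ ⌈M * S ω i⌉}
      ≤ μ (({ω | ∃ i, δ < |Shat ω i - S ω i|} ∪ (S ⁻¹' Set.Icc (0:Fin d → ℝ) 1)ᶜ) ∪
          ⋃ i, {ω | S ω i ∈ B}) := measure_mono hsub
    _ ≤ μ ({ω | ∃ i, δ < |Shat ω i - S ω i|} ∪ (S ⁻¹' Set.Icc (0:Fin d → ℝ) 1)ᶜ) +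
          μ (⋃ i, {ω | S ω i ∈ B}) := measure_union_le _ _
    _ ≤ (μ {ω | ∃ i, δ < |Shat ω i - S ω i|} + μ (S ⁻¹' Set.Icc (0:Fin d → ℝ) 1)ᶜ) +
          ∑ i : Fin d, μ {ω | S ω i ∈ B} :=
        add_le_add (measure_union_le _ _) (measure_iUnion_fintype_le _ _)
    _ ≤ (ENNReal.ofReal ε + 0) + (∑ _j : Fin d, ENNReal.ofReal (2*β)) := by
        refine add_le_add (add_le_add herr (le_of_eq hG)) (Finset.sum_le_sum fun i _ => ?_)
        rw [hev i B hBmeas]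
        exact hB
    _ = ENNReal.ofReal ε + (d : ENNReal) * ENNReal.ofReal (2*β) := by
        rw [add_zero, Finset.sum_const, Finset.card_univ, Fintype.card_fin, nsmul_eq_mul]
    _ = ENNReal.ofReal (ε + 2*d*β) := by
        rw [← ENNReal.ofReal_natCast d, ← ENNReal.ofReal_mul (by positivity),
          ← ENNReal.ofReal_add hε0 (by positivity)]
        congr 1
        ring
end
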